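/- Let R be a ring and a, b ∈ R. If ab has a Hirano inverse, then ba has a Hirano inverse. -/

import Mathlib

def IsHiranoInverse {R : Type*} [Ring R] (a b : R) : Prop :=
  IsNilpotent (a ^ 2 - a * b) ∧ a * b = b * a ∧ b = b * a * b

private lemma aux_comm {S : Type*} [CommRing S] (x y : S)
    (hn : IsNilpotent (x ^ 2 - x * y)) (hy : y = y * x * y) :
    IsNilpotent (x - y) := by
  set e := x * y with he_def
  have he : e * e = e := by
    simp only [he_def]; linear_combination (-x : S) * hy
  have hey : e * y = y := by
    simp only [he_def]; linear_combination (-1 : S) * hy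
  have hy2 : y * y = e - (y * y) * (x ^ 2 - e) := by
    have hyx : y * y * (x ^ 2) = e := by
      simp only [he_def]; linear_combination (-x : S) * hy
    have hy2e : y * y * e = y * y := by
      simp only [he_def]; linear_combination (-y : S) * hy
    linear_combination hyx - hy2e
  -- A = x*(1-e)
  have hA : IsNilpotent (x * (1 - e)) := by
    have hsq : (x * (1 - e)) ^ 2 = (x ^ 2 - e) * (1 - e) := by
      linear_combination (x ^ 2 - 1) * he
    have : IsNilpotent ((x ^ 2 - e) * (1 - e)) :=
      (Commute.all _ _).isNilpotent_mul_right hn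
    obtain ⟨k, hk⟩ := this
    exact ⟨2 * k, by rw [pow_mul, hsq, hk]⟩
  -- B = x*e - y
  have hB : IsNilpotent (x * e - y) := by
    have hsq : (x * e - y) ^ 2 = (x ^ 2 - e) * (e - y * y) := by
      simp only [he_def]; linear_combination (y - x ^ 3) * hy
    have : IsNilpotent ((x ^ 2 - e) * (e - y * y)) :=
      (Commute.all _ _).isNilpotent_mul_right hn
    obtain ⟨k, hk⟩ := this
    exact ⟨2 * k, by rw [pow_mul, hsq, hk]⟩
  have : x - y = x * (1 - e) + (x * e - y) := by ring
  rw [this]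
  exact (Commute.all _ _).isNilpotent_add hA hB

private lemma aux_noncomm {R : Type*} [Ring R] (x y : R)
    (hc : x * y = y * x) (hn : IsNilpotent (x ^ 2 - x * y)) (hy : y = y * x * y) :
    IsNilpotent (x - y) := by
  have hcomm : ∀ p ∈ ({x, y} : Set R), ∀ q ∈ ({x, y} : Set R), p * q = q * p := by
    rintro p (rfl | rfl) q (rfl | rfl)
    · rfl
    · exact hc
    · exact hc.symm
    · rfl
  letI : CommRing (Subring.closure ({x, y} : Set R)) :=
    Subring.closureCommRingOfComm hcomm
  have hxm : x ∈ Subring.closure ({x, y} : Set R) :=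
    Subring.subset_closure (by simp)
  have hym : y ∈ Subring.closure ({x, y} : Set R) :=
    Subring.subset_closure (by simp)
  set x' : Subring.closure ({x, y} : Set R) := ⟨x, hxm⟩
  set y' : Subring.closure ({x, y} : Set R) := ⟨y, hym⟩
  have hn' : IsNilpotent (x' ^ 2 - x' * y') := by
    obtain ⟨k, hk⟩ := hn
    exact ⟨k, by ext; push_cast; simpa using hk⟩
  have hy' : y' = y' * x' * y' := by ext; push_cast; simpa using hy
  obtain ⟨k, hk⟩ := aux_comm x' y' hn' hy'
  refine ⟨k, ?_⟩
  have := congrArg (Subring.subtype _) hk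
  simpa using this

private lemma aux_conj {R : Type*} [Ring R] (a b m : R)
    (hcom : m * (a * b) = (a * b) * m) (hm : IsNilpotent m) :
    IsNilpotent (b * (m * a)) := by
  obtain ⟨k, hk⟩ := hm
  have key : ∀ n, (b * (m * a)) ^ (n + 1) = b * ((m * (a * b)) ^ n * (m * a)) := by
    intro n
    induction n with
    | zero => simp
    | succ n ih =>
      rw [pow_succ, ih]
      simp only [pow_succ, mul_assoc]
  refine ⟨k + 1, ?_⟩
  rw [key k, (Commute.mul_pow hcom k : (m * (a * b)) ^ k = _)]
  rw [hk]
  simp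

theorem stmt13 {R : Type*} [Ring R] (a b : R)
    (h : ∃ y, IsHiranoInverse (a * b) y) : ∃ y, IsHiranoInverse (b * a) y := by
  obtain ⟨y, hn, hc, hy⟩ := h
  -- key identities
  have k1 : a * b * y * y = y := by
    rw [hc]; exact (by rw [mul_assoc] : y * (a * b) * y = y * ((a * b) * y)) ▸ hy.symm
  have k2 : y * y * (a * b) = y := by
    rw [mul_assoc, ← hc, ← mul_assoc]; exact hy.symm
  have hk1 : ∀ t : R, a * (b * (y * (y * t))) = y * t := by
    intro t
    calc a * (b * (y * (y * t))) = (a * b * y * y) * t := by simp only [mul_assoc]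
    _ = y * t := by rw [k1]
  have hk2 : ∀ t : R, y * (y * (a * (b * t))) = y * t := by
    intro t
    calc y * (y * (a * (b * t))) = (y * y * (a * b)) * t := by simp only [mul_assoc]
    _ = y * t := by rw [k2]
  refine ⟨b * (y * (y * a)), ?_, ?_, ?_⟩
  · -- nilpotency
    have hm : IsNilpotent (a * b - y) := aux_noncomm (a * b) y hc hn hy
    have hcom : (a * b - y) * (a * b) = (a * b) * (a * b - y) := by
      rw [sub_mul, mul_sub, hc]
    have := aux_conj a b (a * b - y) hcom hm
    have heq : (b * a) ^ 2 - (b * a) * (b * (y * (y * a))) = b * ((a * b - y) * a) := by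
      have h1 : (b * a) * (b * (y * (y * a))) = b * (y * a) := by
        rw [mul_assoc, hk1]
      have h2 : (b * a) ^ 2 = b * ((a * b) * a) := by
        rw [pow_two]; simp only [mul_assoc]
      rw [h1, h2, sub_mul, mul_sub]
    rw [heq]
    exact this
  · -- commutation
    calc (b * a) * (b * (y * (y * a))) = b * (a * (b * (y * (y * a)))) := by
          simp only [mul_assoc]
      _ = b * (y * a) := by rw [hk1]
      _ = b * (y * (y * (a * (b * a)))) := by rw [hk2]
      _ = (b * (y * (y * a))) * (b * a) := by simp only [mul_assoc]
  · -- inner inverse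
    calc b * (y * (y * a))
        = b * (y * (y * (a * (b * (y * a))))) := by rw [hk2]
      _ = b * (y * (y * (a * (b * (a * (b * (y * (y * a))))))))  := by rw [hk1]
      _ = b * (y * (y * a)) * (b * a) * (b * (y * (y * a))) := by simp only [mul_assoc]
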